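/- Let n ∈ ℕ, Δt > 0, ζ ∈ [1/2, 1], let M ∈ ℝ^{n×n} be symmetric positive definite and A ∈ ℝ^{n×n} symmetric positive semidefinite, and let e⁻, e, ė⁻, ė, r ∈ ℝⁿ satisfy the error scheme equations (1/Δt)·M(ė − ė⁻) + A((1−ζ)e⁻ + ζe) = r and (1/Δt)(e − e⁻) = (1−ζ)ė⁻ + ζė. Define the energy norms E⁻ := (ė⁻ᵀMė⁻ + e⁻ᵀAe⁻)^{1/2} and E := (ėᵀMė + eᵀAe)^{1/2}, and the dual residual norm ‖r‖_* := (rᵀM⁻¹r)^{1/2}. Then E² − (E⁻)² ≤ 2Δt·‖r‖_*·(E⁻ + E). -/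

import Mathlib

set_option maxHeartbeats 1000000
open Matrix

variable {n : ℕ}

lemma symswap (B : Matrix (Fin n) (Fin n) ℝ) (hB : B.IsHermitian) (x y : Fin n → ℝ) :
    x ⬝ᵥ B *ᵥ y = y ⬝ᵥ B *ᵥ x := by
  have hBt : Bᵀ = B := (by simpa using hB : B.IsSymm)
  rw [dotProduct_mulVec, ← mulVec_transpose, hBt, dotProduct_comm]

lemma psd_nonneg (B : Matrix (Fin n) (Fin n) ℝ) (hB : B.PosSemidef) (x : Fin n → ℝ) :
    0 ≤ x ⬝ᵥ B *ᵥ x := by simpa using hB.dotProduct_mulVec_nonneg x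

lemma psd_cs (B : Matrix (Fin n) (Fin n) ℝ) (hB : B.PosSemidef) (x y : Fin n → ℝ) :
    x ⬝ᵥ B *ᵥ y ≤ Real.sqrt (x ⬝ᵥ B *ᵥ x) * Real.sqrt (y ⬝ᵥ B *ᵥ y) := by
  have hsq : (x ⬝ᵥ B *ᵥ y) ^ 2 ≤ (x ⬝ᵥ B *ᵥ x) * (y ⬝ᵥ B *ᵥ y) := by
    have hd := discrim_le_zero (a := y ⬝ᵥ B *ᵥ y) (b := 2 * (x ⬝ᵥ B *ᵥ y)) (c := x ⬝ᵥ B *ᵥ x) ?_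
    · rw [discrim] at hd; nlinarith [hd]
    · intro t
      have h0 := psd_nonneg B hB (x + t • y)
      have hs := symswap B hB.1 y x
      simp only [mulVec_add, mulVec_smul, dotProduct_add, add_dotProduct, dotProduct_smul,
        smul_dotProduct, smul_eq_mul] at h0
      rw [hs] at h0; nlinarith [h0]
  have h1 : x ⬝ᵥ B *ᵥ y ≤ |x ⬝ᵥ B *ᵥ y| := le_abs_self _
  have h2 : |x ⬝ᵥ B *ᵥ y| = Real.sqrt ((x ⬝ᵥ B *ᵥ y) ^ 2) := (Real.sqrt_sq_eq_abs _).symm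
  calc x ⬝ᵥ B *ᵥ y ≤ Real.sqrt ((x ⬝ᵥ B *ᵥ y) ^ 2) := h2 ▸ h1
    _ ≤ Real.sqrt ((x ⬝ᵥ B *ᵥ x) * (y ⬝ᵥ B *ᵥ y)) := Real.sqrt_le_sqrt hsq
    _ = _ := Real.sqrt_mul (psd_nonneg B hB x) _

/-- One-step a posteriori bound for the error scheme of the ζ-scheme, for
`ζ ∈ [1/2, 1]`, `M` symmetric positive definite, `A` symmetric positive
semidefinite: with energy norms `E⁻ = (ė⁻ᵀMė⁻ + e⁻ᵀAe⁻)^{1/2}`,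
`E = (ėᵀMė + eᵀAe)^{1/2}` and dual residual norm `‖r‖_* = (rᵀM⁻¹r)^{1/2}`,
one has `E² − (E⁻)² ≤ 2Δt·‖r‖_*·(E⁻ + E)`. -/
theorem error_scheme_energy_step_bound (n : ℕ) (Δt : ℝ) (hΔt : 0 < Δt)
    (ζ : ℝ) (hζ : ζ ∈ Set.Icc (1 / 2 : ℝ) 1)
    (M A : Matrix (Fin n) (Fin n) ℝ) (hM : M.PosDef) (hA : A.PosSemidef)
    (em e dem de r : Fin n → ℝ)
    (h1 : (1 / Δt) • (M *ᵥ (de - dem)) + A *ᵥ ((1 - ζ) • em + ζ • e) = r)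
    (h2 : (1 / Δt) • (e - em) = (1 - ζ) • dem + ζ • de) :
    (Real.sqrt (de ⬝ᵥ (M *ᵥ de) + e ⬝ᵥ (A *ᵥ e))) ^ 2 -
        (Real.sqrt (dem ⬝ᵥ (M *ᵥ dem) + em ⬝ᵥ (A *ᵥ em))) ^ 2 ≤
      2 * Δt * Real.sqrt (r ⬝ᵥ (M⁻¹ *ᵥ r)) *
        (Real.sqrt (dem ⬝ᵥ (M *ᵥ dem) + em ⬝ᵥ (A *ᵥ em)) +
          Real.sqrt (de ⬝ᵥ (M *ᵥ de) + e ⬝ᵥ (A *ᵥ e))) := by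
  obtain ⟨hz1, hz2⟩ := hζ
  set w : Fin n → ℝ := (1 - ζ) • dem + ζ • de with hwdef
  set u : Fin n → ℝ := (1 - ζ) • em + ζ • e with hudef
  set a := dem ⬝ᵥ M *ᵥ dem with hadef
  set b := de ⬝ᵥ M *ᵥ de with hbdef
  set p := em ⬝ᵥ A *ᵥ em with hpdef
  set q := e ⬝ᵥ A *ᵥ e with hqdef
  have ha0 : 0 ≤ a := psd_nonneg M hM.posSemidef dem
  have hb0 : 0 ≤ b := psd_nonneg M hM.posSemidef de
  have hp0 : 0 ≤ p := psd_nonneg A hA em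
  have hq0 : 0 ≤ q := psd_nonneg A hA e
  -- step relation
  have hw : e - em = Δt • w := by
    rw [← h2, smul_smul, mul_one_div, div_self hΔt.ne', one_smul]
  -- test equation 1 with w
  have key : (1 / Δt) * (w ⬝ᵥ M *ᵥ (de - dem)) + w ⬝ᵥ A *ᵥ u = w ⬝ᵥ r := by
    have := congrArg (fun v => w ⬝ᵥ v) h1
    simpa only [dotProduct_add, dotProduct_smul, smul_eq_mul] using this
  have key2 : w ⬝ᵥ M *ᵥ (de - dem) + Δt * (w ⬝ᵥ A *ᵥ u) = Δt * (w ⬝ᵥ r) := by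
    have h := congrArg (fun t => Δt * t) key
    simp only [mul_add, ← mul_assoc] at h
    rw [mul_one_div, div_self hΔt.ne', one_mul] at h
    exact h
  have hAu : Δt * (w ⬝ᵥ A *ᵥ u) = (e - em) ⬝ᵥ A *ᵥ u := by
    rw [hw, smul_dotProduct, smul_eq_mul]
  -- inequality 1
  have hsM : de ⬝ᵥ M *ᵥ dem = dem ⬝ᵥ M *ᵥ de := symswap M hM.1 de dem
  have e1 : w ⬝ᵥ M *ᵥ (de - dem)
      = ζ * b - (1 - ζ) * a + (1 - 2 * ζ) * (dem ⬝ᵥ M *ᵥ de) := by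
    simp only [hwdef, mulVec_sub, dotProduct_sub, add_dotProduct, smul_dotProduct, smul_eq_mul,
      ← hadef, ← hbdef]
    rw [hsM]; ring
  have hposM : 0 ≤ (de - dem) ⬝ᵥ M *ᵥ (de - dem) := psd_nonneg M hM.posSemidef _
  have e2 : (de - dem) ⬝ᵥ M *ᵥ (de - dem) = b + a - 2 * (dem ⬝ᵥ M *ᵥ de) := by
    simp only [mulVec_sub, dotProduct_sub, sub_dotProduct, ← hadef, ← hbdef]
    rw [hsM]; ring
  have ineq1 : b - a ≤ 2 * (w ⬝ᵥ M *ᵥ (de - dem)) := by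
    rw [e2] at hposM; rw [e1]; nlinarith [hposM, hz1]
  -- inequality 2
  have hsA : e ⬝ᵥ A *ᵥ em = em ⬝ᵥ A *ᵥ e := symswap A hA.1 e em
  have f1 : (e - em) ⬝ᵥ A *ᵥ u
      = ζ * q - (1 - ζ) * p + (1 - 2 * ζ) * (em ⬝ᵥ A *ᵥ e) := by
    simp only [hudef, mulVec_add, mulVec_smul, dotProduct_add, sub_dotProduct,
      dotProduct_smul, smul_eq_mul, ← hpdef, ← hqdef]
    rw [hsA]; ring
  have hposA : 0 ≤ (e - em) ⬝ᵥ A *ᵥ (e - em) := psd_nonneg A hA _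
  have f2 : (e - em) ⬝ᵥ A *ᵥ (e - em) = q + p - 2 * (em ⬝ᵥ A *ᵥ e) := by
    simp only [mulVec_sub, dotProduct_sub, sub_dotProduct, ← hpdef, ← hqdef]
    rw [hsA]; ring
  have ineq2 : q - p ≤ 2 * ((e - em) ⬝ᵥ A *ᵥ u) := by
    rw [f2] at hposA; rw [f1]; nlinarith [hposA, hz1]
  -- combine
  have main : (b + q) - (a + p) ≤ 2 * Δt * (w ⬝ᵥ r) := by
    rw [hAu] at key2; nlinarith [key2, ineq1, ineq2]
  -- dual norm bound on residual term
  have hdet : IsUnit M.det := isUnit_iff_ne_zero.mpr hM.det_pos.ne'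
  set s : Fin n → ℝ := M⁻¹ *ᵥ r with hsdef
  have hMs : M *ᵥ s = r := by
    rw [hsdef, mulVec_mulVec, mul_nonsing_inv _ hdet, one_mulVec]
  have hrw : w ⬝ᵥ r = s ⬝ᵥ M *ᵥ w := by
    rw [← hMs, symswap M hM.1 w (M⁻¹ *ᵥ r)]
  have hss : s ⬝ᵥ M *ᵥ s = r ⬝ᵥ M⁻¹ *ᵥ r := by
    rw [hMs, hsdef, dotProduct_comm]
  have hcs1 : w ⬝ᵥ r ≤ Real.sqrt (r ⬝ᵥ M⁻¹ *ᵥ r) * Real.sqrt (w ⬝ᵥ M *ᵥ w) := by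
    rw [hrw, ← hss]
    exact psd_cs M hM.posSemidef s w
  -- bound sqrt(wMw)
  have hcsM := psd_cs M hM.posSemidef dem de
  rw [← hadef, ← hbdef] at hcsM
  have ew : w ⬝ᵥ M *ᵥ w
      = (1 - ζ)^2 * a + 2 * (1 - ζ) * ζ * (dem ⬝ᵥ M *ᵥ de) + ζ^2 * b := by
    simp only [hwdef, mulVec_add, mulVec_smul, dotProduct_add, add_dotProduct,
      dotProduct_smul, smul_dotProduct, smul_eq_mul, ← hadef, ← hbdef]
    rw [hsM]; ring
  have hsa := Real.sq_sqrt ha0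
  have hsb := Real.sq_sqrt hb0
  have hna := Real.sqrt_nonneg a
  have hnb := Real.sqrt_nonneg b
  have hwle : w ⬝ᵥ M *ᵥ w ≤ ((1 - ζ) * Real.sqrt a + ζ * Real.sqrt b)^2 := by
    rw [ew]
    nlinarith [mul_le_mul_of_nonneg_left hcsM (by nlinarith : (0:ℝ) ≤ 2 * (1 - ζ) * ζ)]
  have hwsqrt : Real.sqrt (w ⬝ᵥ M *ᵥ w) ≤ (1 - ζ) * Real.sqrt a + ζ * Real.sqrt b := by
    calc Real.sqrt (w ⬝ᵥ M *ᵥ w) ≤ Real.sqrt (((1 - ζ) * Real.sqrt a + ζ * Real.sqrt b)^2) :=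
          Real.sqrt_le_sqrt hwle
      _ = (1 - ζ) * Real.sqrt a + ζ * Real.sqrt b := Real.sqrt_sq (by nlinarith)
  have hEm : Real.sqrt a ≤ Real.sqrt (a + p) := Real.sqrt_le_sqrt (by linarith)
  have hE : Real.sqrt b ≤ Real.sqrt (b + q) := Real.sqrt_le_sqrt (by linarith)
  have hwE : Real.sqrt (w ⬝ᵥ M *ᵥ w) ≤ Real.sqrt (a + p) + Real.sqrt (b + q) := by
    have h1' : (1 - ζ) * Real.sqrt a ≤ Real.sqrt (a + p) :=
      le_trans (mul_le_of_le_one_left hna (by linarith)) hEm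
    have h2' : ζ * Real.sqrt b ≤ Real.sqrt (b + q) :=
      le_trans (mul_le_of_le_one_left hnb hz2) hE
    exact hwsqrt.trans (add_le_add h1' h2')
  -- final assembly
  have hr0 : (0:ℝ) ≤ Real.sqrt (r ⬝ᵥ M⁻¹ *ᵥ r) := Real.sqrt_nonneg _
  have hfin : (b + q) - (a + p)
      ≤ 2 * Δt * Real.sqrt (r ⬝ᵥ M⁻¹ *ᵥ r) * (Real.sqrt (a + p) + Real.sqrt (b + q)) := by
    have step1 : 2 * Δt * (w ⬝ᵥ r)
        ≤ 2 * Δt * (Real.sqrt (r ⬝ᵥ M⁻¹ *ᵥ r) * Real.sqrt (w ⬝ᵥ M *ᵥ w)) :=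
      mul_le_mul_of_nonneg_left hcs1 (by linarith)
    have step2 : Real.sqrt (r ⬝ᵥ M⁻¹ *ᵥ r) * Real.sqrt (w ⬝ᵥ M *ᵥ w)
        ≤ Real.sqrt (r ⬝ᵥ M⁻¹ *ᵥ r) * (Real.sqrt (a + p) + Real.sqrt (b + q)) :=
      mul_le_mul_of_nonneg_left hwE hr0
    have step3 : 2 * Δt * (Real.sqrt (r ⬝ᵥ M⁻¹ *ᵥ r) * Real.sqrt (w ⬝ᵥ M *ᵥ w))
        ≤ 2 * Δt * (Real.sqrt (r ⬝ᵥ M⁻¹ *ᵥ r) * (Real.sqrt (a + p) + Real.sqrt (b + q))) :=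
      mul_le_mul_of_nonneg_left step2 (by linarith)
    calc (b + q) - (a + p) ≤ 2 * Δt * (w ⬝ᵥ r) := main
      _ ≤ _ := step1.trans step3
      _ = _ := by ring
  rw [Real.sq_sqrt (by linarith : (0:ℝ) ≤ b + q), Real.sq_sqrt (by linarith : (0:ℝ) ≤ a + p)]
  exact hfin
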